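/- Let m,n ≥ 2 and 0 < r < (m-1)(n-1) be integers and set g = (m-1)(n-1). For any (a,b,h) attaining δ_r(m,n) = an + bm - h with (a,b,h) ∈ I_r, one has a ≤ m-2 and b ≤ n-2; i.e. the minimizer never has a = m-1 or b = n-1. -/
import Mathlib


/-- `δ_r(m,n)`: the minimum of `a*n + b*m - h` over the set
`I_r = {(a,b,h) : 0 ≤ a ≤ m-1, 0 ≤ b ≤ n-1, h ≥ 0, r = (a+1)(b+1)-1-h}`. -/
noncomputable def delta (m n r : ℤ) : ℤ :=
  sInf {d : ℤ | ∃ a b h : ℤ, 0 ≤ a ∧ a ≤ m - 1 ∧ 0 ≤ b ∧ b ≤ n - 1 ∧ 0 ≤ h ∧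
    r = (a + 1) * (b + 1) - 1 - h ∧ d = a * n + b * m - h}

lemma delta_le (m n r : ℤ) (hm : 2 ≤ m) (hn : 2 ≤ n)
    (hr0 : 0 < r) (hr1 : r < (m - 1) * (n - 1)) :
    delta m n r ≤ (m - 1) * (n - 1) - 1 + r := by
  have hbdd : BddBelow {d : ℤ | ∃ a b h : ℤ, 0 ≤ a ∧ a ≤ m - 1 ∧ 0 ≤ b ∧ b ≤ n - 1 ∧ 0 ≤ h ∧
      r = (a + 1) * (b + 1) - 1 - h ∧ d = a * n + b * m - h} := by
    refine ⟨1 + r - m * n, ?_⟩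
    rintro d ⟨a, b, h, ha0, ha1, hb0, hb1, hh, hrel, hd⟩
    have h1 : a * n ≥ 0 := mul_nonneg ha0 (by linarith)
    have h2 : b * m ≥ 0 := mul_nonneg hb0 (by linarith)
    have h3 : (a + 1) * (b + 1) ≤ m * n := by
      have := mul_le_mul (by linarith : a + 1 ≤ m) (by linarith : b + 1 ≤ n)
        (by linarith) (by linarith)
      linarith
    have : h = (a + 1) * (b + 1) - 1 - r := by linarith
    subst hd
    linarith
  apply csInf_le hbdd
  refine ⟨m - 2, n - 2, (m - 1) * (n - 1) - 1 - r, by linarith, by linarith, by linarith,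
    by linarith, by linarith, by ring, by ring⟩

/-- Any `(a,b,h) ∈ I_r` attaining `δ_r(m,n) = an + bm - h` satisfies `a ≤ m-2` and `b ≤ n-2`:
the minimizer never has `a = m-1` or `b = n-1`. -/
theorem minimizer_bounds (m n r a b h : ℤ) (hm : 2 ≤ m) (hn : 2 ≤ n)
    (hr0 : 0 < r) (hr1 : r < (m - 1) * (n - 1))
    (ha0 : 0 ≤ a) (ha1 : a ≤ m - 1) (hb0 : 0 ≤ b) (hb1 : b ≤ n - 1) (hh : 0 ≤ h)
    (hrel : r = (a + 1) * (b + 1) - 1 - h)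
    (hmin : delta m n r = a * n + b * m - h) :
    a ≤ m - 2 ∧ b ≤ n - 2 := by
  have hle := delta_le m n r hm hn hr0 hr1
  rw [hmin] at hle
  constructor
  · by_contra hc
    have ha : a = m - 1 := by omega
    subst ha
    -- value is (m-1)(n-1) + r, contradiction with hle
    nlinarith [hrel, hle]
  · by_contra hc
    have hb : b = n - 1 := by omega
    subst hb
    nlinarith [hrel, hle]
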